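/- Let I be a subspace of strictly upper triangular (n+1)×(n+1) matrices that is stable under Lie bracket with all upper triangular matrices and stable under conjugation by diagonal matrices. Then I is spanned by the elementary matrices t_{ij} (i<j) it contains, and the set of (i,j) with t_{ij} ∈ I is an upper order ideal: if t_{ij} ∈ I and i' ≤ i, j ≤ j', i' < j', then t_{i'j'} ∈ I. -/

import Mathlib

/-- Let `I` be a subspace of strictly upper triangular `(n+1)×(n+1)`
complex matrices that is stable under Lie bracket with all upper triangular matrices
and stable under conjugation by (invertible) diagonal matrices.  Then `I` is spanned
by the elementary matrices `t_{ij}` (`i < j`) it contains, and the set of `(i,j)` with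
`t_{ij} ∈ I` is an upper order ideal: if `t_{ij} ∈ I` and `i' ≤ i`, `j ≤ j'`, `i' < j'`,
then `t_{i'j'} ∈ I`. -/
theorem adNilpotent_ideal_is_sum_of_root_spaces (n : ℕ)
    (I : Submodule ℂ (Matrix (Fin (n + 1)) (Fin (n + 1)) ℂ))
    (hstrict : ∀ x ∈ I, ∀ i j : Fin (n + 1), j ≤ i → x i j = 0)
    (hbracket : ∀ b : Matrix (Fin (n + 1)) (Fin (n + 1)) ℂ,
      (∀ i j : Fin (n + 1), j < i → b i j = 0) → ∀ x ∈ I, b * x - x * b ∈ I)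
    (hdiag : ∀ d : Fin (n + 1) → ℂˣ, ∀ x ∈ I,
      (Matrix.diagonal (fun i => (d i : ℂ))) * x *
        (Matrix.diagonal (fun i => (((d i)⁻¹ : ℂˣ) : ℂ))) ∈ I) :
    I = Submodule.span ℂ
        {m | ∃ i j : Fin (n + 1), i < j ∧ m = Matrix.single i j (1 : ℂ) ∧ m ∈ I} ∧
    ∀ i j i' j' : Fin (n + 1), i < j → Matrix.single i j (1 : ℂ) ∈ I →
      i' ≤ i → j ≤ j' → i' < j' → Matrix.single i' j' (1 : ℂ) ∈ I := by
  -- Component extraction: each graded component of an element of I lies in I.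
  have comp : ∀ x ∈ I, ∀ i0 j0 : Fin (n + 1), i0 < j0 →
      x i0 j0 • Matrix.single i0 j0 (1 : ℂ) ∈ I := by
    intro x hx i0 j0 hij
    set d : Fin (n+1) → ℂ := fun i => if i = i0 then 1 else 0 with hd
    set d' : Fin (n+1) → ℂ := fun i => if i = j0 then 1 else 0 with hd'
    have h1 := hbracket (Matrix.diagonal d)
      (by intro i j hji; exact Matrix.diagonal_apply_ne' d (by omega : j ≠ i)) x hx
    have h2 := hbracket (Matrix.diagonal d')
      (by intro i j hji; exact Matrix.diagonal_apply_ne' d' (by omega : j ≠ i))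
      _ h1
    have key : Matrix.diagonal d' * (Matrix.diagonal d * x - x * Matrix.diagonal d)
        - (Matrix.diagonal d * x - x * Matrix.diagonal d) * Matrix.diagonal d'
        = -(x i0 j0 • Matrix.single i0 j0 (1:ℂ)) := by
      ext i j
      have hx0 : x j0 i0 = 0 := hstrict x hx j0 i0 (le_of_lt hij)
      clear hstrict hbracket hdiag hx h1 h2
      simp only [Matrix.sub_apply, Matrix.diagonal_mul, Matrix.mul_diagonal,
        Matrix.neg_apply, Matrix.smul_apply, Matrix.single, Matrix.of_apply,
        hd, hd', smul_eq_mul]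
      by_cases h1 : i = i0 <;> by_cases h2 : j = j0 <;> by_cases h3 : i = j0 <;>
        by_cases h4 : j = i0 <;> subst_vars <;> simp_all <;> ring_nf <;> omega
    rw [key] at h2
    simpa using I.neg_mem h2
  constructor
  · apply le_antisymm
    · intro x hx
      have hrep : x = ∑ i : Fin (n+1), ∑ j : Fin (n+1),
          Matrix.single i j (x i j) := Matrix.matrix_eq_sum_single x
      rw [hrep]
      apply Submodule.sum_mem
      intro i _
      apply Submodule.sum_mem
      intro j _
      by_cases hij : i < j
      · by_cases hz : x i j = 0
        · simp [hz]
        · have hmem : x i j • Matrix.single i j (1 : ℂ) ∈ I := comp x hx i j hij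
          have hE : Matrix.single i j (1 : ℂ) ∈ I := by
            have := I.smul_mem (x i j)⁻¹ hmem
            rwa [smul_smul, inv_mul_cancel₀ hz, one_smul] at this
          have hS : Matrix.single i j (1 : ℂ) ∈
              {m | ∃ i' j' : Fin (n + 1), i' < j' ∧
                m = Matrix.single i' j' (1 : ℂ) ∧ m ∈ I} :=
            ⟨i, j, hij, rfl, hE⟩
          have : Matrix.single i j (x i j)
              = x i j • Matrix.single i j (1 : ℂ) := by
            rw [Matrix.smul_single, smul_eq_mul, mul_one]
          rw [this]
          exact Submodule.smul_mem _ _ (Submodule.subset_span hS)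
      · have : x i j = 0 := hstrict x hx i j (by omega)
        simp [this]
    · rw [Submodule.span_le]
      rintro m ⟨i, j, _, _, hm⟩
      exact hm
  · intro i j i' j' hij hE hi' hj' hij'
    -- first move the row up: t_{i'j} ∈ I
    have step1 : Matrix.single i' j (1 : ℂ) ∈ I := by
      rcases eq_or_lt_of_le hi' with h | h
      · subst h; exact hE
      · have hb : ∀ a b : Fin (n+1), b < a →
            Matrix.single i' i (1 : ℂ) a b = 0 := by
          intro a b hba
          rw [Matrix.single]
          simp only [Matrix.of_apply]
          rw [if_neg]
          rintro ⟨rfl, rfl⟩; omega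
        have := hbracket _ hb _ hE
        have hcalc : Matrix.single i' i (1 : ℂ) * Matrix.single i j (1 : ℂ)
            - Matrix.single i j (1 : ℂ) * Matrix.single i' i (1 : ℂ)
            = Matrix.single i' j (1 : ℂ) := by
          rw [Matrix.single_mul_single_same,
            Matrix.single_mul_single_of_ne (h := (by omega : j ≠ i'))]
          simp
        rwa [hcalc] at this
    -- then move the column right: t_{i'j'} ∈ I
    rcases eq_or_lt_of_le hj' with h | h
    · subst h; exact step1
    · have hb : ∀ a b : Fin (n+1), b < a →
          Matrix.single j j' (1 : ℂ) a b = 0 := by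
        intro a b hba
        rw [Matrix.single]
        simp only [Matrix.of_apply]
        rw [if_neg]
        rintro ⟨rfl, rfl⟩; omega
      have hmem := hbracket _ hb _ step1
      have hcalc : Matrix.single j j' (1 : ℂ) * Matrix.single i' j (1 : ℂ)
          - Matrix.single i' j (1 : ℂ) * Matrix.single j j' (1 : ℂ)
          = -Matrix.single i' j' (1 : ℂ) := by
        rw [Matrix.single_mul_single_of_ne (h := (by omega : j' ≠ i')),
          Matrix.single_mul_single_same]
        simp
      rw [hcalc] at hmem
      simpa using I.neg_mem hmem
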